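/- Let R be an n×n Hermitian positive semidefinite complex matrix, B ∈ ℂ^{n×m} of rank m, and suppose Γ₁, Γ₂ ∈ ℂ^{m×n} are both minimizers, with respect to the Loewner order, of q_R(Γ) = Γ R Γ* subject to Γ B = I_m, and Γ₁ ≠ Γ₂. Then there exists a nonzero vector v ∈ ℂ^n with B* v = 0 and R v = 0. Consequently, the minimizer is unique if and only if the n×(n+m) block matrix [R B] has rank n. -/

import Mathlib

open Matrix ComplexOrder

/-- If a Hermitian PSD matrix `R` and a full-column-rank `B` admit two distinct
Loewner-order minimizers of `Γ ↦ Γ R Γ*` subject to `Γ B = I`, then `R` and `B*`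
have a common nonzero null vector; consequently `rank [R B] < n`. -/
theorem stmt_1 {n m : ℕ} (R : Matrix (Fin n) (Fin n) ℂ) (hR : R.PosSemidef)
    (B : Matrix (Fin n) (Fin m) ℂ) (hB : B.rank = m)
    (Γ₁ Γ₂ : Matrix (Fin m) (Fin n) ℂ)
    (h₁B : Γ₁ * B = 1) (h₂B : Γ₂ * B = 1)
    (h₁min : ∀ Γ : Matrix (Fin m) (Fin n) ℂ, Γ * B = 1 →
      (Γ * R * Γᴴ - Γ₁ * R * Γ₁ᴴ).PosSemidef)
    (h₂min : ∀ Γ : Matrix (Fin m) (Fin n) ℂ, Γ * B = 1 →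
      (Γ * R * Γᴴ - Γ₂ * R * Γ₂ᴴ).PosSemidef)
    (hne : Γ₁ ≠ Γ₂) :
    (∃ v : Fin n → ℂ, v ≠ 0 ∧ Bᴴ *ᵥ v = 0 ∧ R *ᵥ v = 0) ∧
      (Matrix.fromCols R B).rank < n := by
  classical
  set Δ : Matrix (Fin m) (Fin n) ℂ := Γ₁ - Γ₂ with hΔ
  have hΔB : Δ * B = 0 := by rw [hΔ]; rw [Matrix.sub_mul, h₁B, h₂B, sub_self]
  set Γ : Matrix (Fin m) (Fin n) ℂ := (2⁻¹ : ℂ) • (Γ₁ + Γ₂) with hΓ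
  have hΓB : Γ * B = 1 := by
    rw [hΓ]
    rw [Matrix.smul_mul, Matrix.add_mul, h₁B, h₂B, ← two_smul ℂ (1 : Matrix (Fin m) (Fin m) ℂ),
      smul_smul]
    norm_num
  have hS₁ := h₁min Γ hΓB
  have hS₂ := h₂min Γ hΓB
  -- key algebraic identity
  have key : (Γ * R * Γᴴ - Γ₁ * R * Γ₁ᴴ) + (Γ * R * Γᴴ - Γ₁ * R * Γ₁ᴴ)
      + ((Γ * R * Γᴴ - Γ₂ * R * Γ₂ᴴ) + (Γ * R * Γᴴ - Γ₂ * R * Γ₂ᴴ))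
      + Δ * R * Δᴴ = 0 := by
    rw [hΓ, hΔ]
    simp only [conjTranspose_smul, conjTranspose_add, conjTranspose_sub, Matrix.sub_mul,
      Matrix.mul_sub, Matrix.add_mul, Matrix.mul_add, Matrix.smul_mul, Matrix.mul_smul,
      smul_add, smul_sub, smul_smul, star_inv₀, Complex.star_def, map_ofNat]
    module
  -- quadratic form of Δ R Δᴴ vanishes
  have hq : ∀ x : Fin m → ℂ, star x ⬝ᵥ ((Δ * R * Δᴴ) *ᵥ x) = 0 := by
    intro x
    have h0 := congrArg (fun M => star x ⬝ᵥ (M *ᵥ x)) key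
    simp only [Matrix.add_mulVec, dotProduct_add, Matrix.zero_mulVec, dotProduct_zero] at h0
    have ha := hS₁.dotProduct_mulVec_nonneg x
    have hb := hS₂.dotProduct_mulVec_nonneg x
    have hc := (hR.mul_mul_conjTranspose_same Δ).dotProduct_mulVec_nonneg x
    have hle : star x ⬝ᵥ ((Δ * R * Δᴴ) *ᵥ x) ≤ 0 := by
      have h1 := eq_neg_of_add_eq_zero_right h0
      rw [h1]
      refine neg_nonpos.mpr ?_
      have := add_nonneg (add_nonneg ha ha) (add_nonneg hb hb)
      exact this
    exact le_antisymm hle hc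
  have hMz : Δ * R * Δᴴ = 0 := by
    have hP := hR.mul_mul_conjTranspose_same Δ
    have hz : ∀ x : Fin m → ℂ, (Δ * R * Δᴴ) *ᵥ x = 0 :=
      fun x => (hP.dotProduct_mulVec_zero_iff x).mp (hq x)
    ext i j
    have := congrFun (hz (Pi.single j 1)) i
    simpa [Matrix.mulVec_single] using this
  obtain ⟨C, hC⟩ : ∃ C : Matrix (Fin n) (Fin n) ℂ, R = Cᴴ * C := by
    open scoped MatrixOrder in
    exact CStarAlgebra.nonneg_iff_eq_star_mul_self.mp hR.nonneg
  have hCΔ : C * Δᴴ = 0 := by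
    rw [← Matrix.conjTranspose_mul_self_eq_zero]
    rw [conjTranspose_mul, conjTranspose_conjTranspose]
    calc Δ * Cᴴ * (C * Δᴴ) = Δ * (Cᴴ * C) * Δᴴ := by
          simp only [Matrix.mul_assoc]
      _ = 0 := by rw [← hC, hMz]
  have hRΔ : R * Δᴴ = 0 := by
    rw [hC, Matrix.mul_assoc, hCΔ, Matrix.mul_zero]
  have hΔne : Δ ≠ 0 := sub_ne_zero.mpr hne
  obtain ⟨i, j, hij⟩ : ∃ i j, Δ i j ≠ 0 := by
    by_contra h
    push_neg at h
    exact hΔne (Matrix.ext fun i j => h i j)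
  set v : Fin n → ℂ := fun k => Δᴴ k i with hv
  have hvne : v ≠ 0 := fun h => hij (by
    have := congrFun h j
    simpa [hv, Matrix.conjTranspose_apply, star_eq_zero] using this)
  have hRv : R *ᵥ v = 0 := by
    funext k
    have := congrFun (congrFun hRΔ k) i
    simpa [Matrix.mul_apply, Matrix.mulVec, dotProduct, hv] using this
  have hBv : Bᴴ *ᵥ v = 0 := by
    have hBΔ : Bᴴ * Δᴴ = 0 := by
      have : (Δ * B)ᴴ = 0 := by rw [hΔB]; simp
      rwa [conjTranspose_mul] at this
    funext k
    have := congrFun (congrFun hBΔ k) i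
    simpa [Matrix.mul_apply, Matrix.mulVec, dotProduct, hv] using this
  refine ⟨⟨v, hvne, hBv, hRv⟩, ?_⟩
  -- rank part
  have hker : v ∈ LinearMap.ker (Matrix.fromCols R B)ᴴ.mulVecLin := by
    rw [LinearMap.mem_ker, Matrix.mulVecLin_apply,
      Matrix.conjTranspose_fromCols_eq_fromRows_conjTranspose, Matrix.fromRows_mulVec,
      hR.isHermitian.eq, hRv, hBv]
    simp
  have hkpos : 0 < Module.finrank ℂ (LinearMap.ker (Matrix.fromCols R B)ᴴ.mulVecLin) := by
    rw [Module.finrank_pos_iff]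
    exact nontrivial_of_ne ⟨v, hker⟩ 0 (fun h => hvne (congrArg Subtype.val h))
  have hrn := LinearMap.finrank_range_add_finrank_ker (Matrix.fromCols R B)ᴴ.mulVecLin
  rw [Module.finrank_pi] at hrn
  have : (Matrix.fromCols R B)ᴴ.rank < n := by
    rw [Matrix.rank]
    simp only [Fintype.card_fin] at hrn
    omega
  rwa [Matrix.rank_conjTranspose] at this
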